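/- arXiv:1710.00180 — 5 statements merged into one kernel-verified Lean document; each statement's English description precedes it below -/
import Mathlib

section
/- Let x, y be unit vectors in a complex Hilbert space K. For any unitary U on K with Ux = y and any scalar λ ∈ ℂ, one has ‖U - λI‖² ≥ 1 - |⟨x, y⟩|². -/
open scoped InnerProductSpace

theorem stmt0 {K : Type*} [NormedAddCommGroup K] [InnerProductSpace ℂ K] [CompleteSpace K]
    (x y : K) (hx : ‖x‖ = 1) (hy : ‖y‖ = 1)
    (U : K →L[ℂ] K) (hU : U ∈ unitary (K →L[ℂ] K)) (hUx : U x = y) (lam : ℂ) :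
    1 - ‖⟪x, y⟫_ℂ‖ ^ 2 ≤ ‖U - lam • (1 : K →L[ℂ] K)‖ ^ 2 := by
  set c := ⟪x, y⟫_ℂ with hc
  have hnorm : ‖y - lam • x‖ ≤ ‖U - lam • (1 : K →L[ℂ] K)‖ := by
    have h := (U - lam • (1 : K →L[ℂ] K)).le_opNorm x
    simpa [hUx, hx] using h
  have hnn : (0:ℝ) ≤ ‖y - lam • x‖ := norm_nonneg _
  have key : 1 - ‖c‖ ^ 2 ≤ ‖y - lam • x‖ ^ 2 := by
    have h1 : ‖y - lam • x‖ ^ 2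
        = 1 - 2 * Complex.re ((starRingEnd ℂ) lam * c) + ‖lam‖ ^ 2 := by
      rw [@norm_sub_sq ℂ]
      have hinner : ⟪y, lam • x⟫_ℂ = lam * (starRingEnd ℂ) c := by
        rw [inner_smul_right, hc, ← inner_conj_symm]
      rw [hinner, norm_smul, hx, hy]
      have : Complex.re (lam * (starRingEnd ℂ) c) = Complex.re ((starRingEnd ℂ) lam * c) := by
        have := Complex.conj_re (lam * (starRingEnd ℂ) c)
        simp only [map_mul, Complex.conj_conj] at this
        rw [← this]
      simp only [RCLike.re_to_complex]
      rw [this]; ring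
    have h2 : ‖lam - c‖ ^ 2
        = ‖lam‖ ^ 2 - 2 * Complex.re ((starRingEnd ℂ) lam * c) + ‖c‖ ^ 2 := by
      rw [@norm_sub_sq ℂ]
      simp [RCLike.inner_apply, RCLike.re_to_complex]
      ring
    nlinarith [sq_nonneg ‖lam - c‖]
  calc 1 - ‖c‖ ^ 2 ≤ ‖y - lam • x‖ ^ 2 := key
    _ ≤ ‖U - lam • (1 : K →L[ℂ] K)‖ ^ 2 := by
        apply pow_le_pow_left₀ hnn hnorm
end

section
/- Let x, y be unit vectors in a complex Hilbert space K of dimension at least 2 (or any Hilbert space). Then there exists a unitary U on K with Ux = y such that the distance from U to the scalar operators ℂI equals √(1 - |⟨x, y⟩|²); i.e., the infimum inf{ d(U, ℂI) : U unitary, Ux = y } is attained and equals √(1 - |⟨x, y⟩|²). -/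
open scoped InnerProductSpace
open Metric ContinuousLinearMap

lemma real_ineq {W C na nb P D Z : ℝ} (hW : 0 ≤ W) (hC0 : 0 ≤ C) (hC1 : C ≤ 1)
    (hs2 : W ^ 2 = 1 - C ^ 2) (hP : 0 ≤ P) (hD0 : 0 ≤ D) (hZ0 : 0 ≤ Z)
    (hD : D ^ 2 = (W * nb) ^ 2 + (W * na) ^ 2 + ((1 - C) * P) ^ 2)
    (hZ : Z ^ 2 = na ^ 2 + nb ^ 2 + P ^ 2) : D ≤ W * Z := by
  have h1C : (1 - C) ^ 2 ≤ W ^ 2 := by nlinarith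
  have hsq : D ^ 2 ≤ (W * Z) ^ 2 := by nlinarith [sq_nonneg P, sq_nonneg na, sq_nonneg nb]
  have h := Real.sqrt_le_sqrt hsq
  rwa [Real.sqrt_sq hD0, Real.sqrt_sq (by positivity)] at h

lemma norm_sq_triple {K : Type*} [NormedAddCommGroup K] [InnerProductSpace ℂ K]
    (e₁ e₂ e₃ : K) (h12 : ⟪e₁, e₂⟫_ℂ = 0) (h13 : ⟪e₁, e₃⟫_ℂ = 0) (h23 : ⟪e₂, e₃⟫_ℂ = 0) :
    ‖e₁ + e₂ + e₃‖ ^ 2 = ‖e₁‖ ^ 2 + ‖e₂‖ ^ 2 + ‖e₃‖ ^ 2 := by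
  rw [norm_add_sq (𝕜 := ℂ), norm_add_sq (𝕜 := ℂ), inner_add_left, h12, h13, h23]
  simp

lemma conj_mul_re (z : ℂ) : ((starRingEnd ℂ) z * z).re = ‖z‖ ^ 2 := by
  rw [← Complex.normSq_eq_conj_mul_self]
  simp [Complex.normSq_eq_norm_sq, ← Complex.ofReal_pow]

lemma aux_le_infDist {α : Type*} [MetricSpace α] {s : Set α} (hs : s.Nonempty) {b : ℝ} {v : α}
    (h : ∀ z ∈ s, b ≤ dist v z) : b ≤ Metric.infDist v s := by
  by_contra hcon
  obtain ⟨z, hz, hlt⟩ := (Metric.infDist_lt_iff hs).mp (lt_of_not_ge hcon)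
  exact absurd (h z hz) (not_le.mpr hlt)

lemma aux_lower {K : Type*} [NormedAddCommGroup K] [InnerProductSpace ℂ K]
    (x y : K) (hx : ‖x‖ = 1) (hy : ‖y‖ = 1) (V : K →L[ℂ] K) (hVx : V x = y) :
    Real.sqrt (1 - ‖⟪x, y⟫_ℂ‖ ^ 2)
      ≤ Metric.infDist V (Set.range fun lam : ℂ => lam • (1 : K →L[ℂ] K)) := by
  refine aux_le_infDist (Set.range_nonempty _) ?_
  rintro _ ⟨lam, rfl⟩
  rw [dist_eq_norm]
  have h1 : ‖y - lam • x‖ ≤ ‖V - lam • 1‖ := by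
    have := (V - lam • (1 : K →L[ℂ] K)).unit_le_opNorm x (le_of_eq hx)
    simpa [hVx] using this
  refine le_trans ?_ h1
  set c := ⟪x, y⟫_ℂ with hc
  have hyx : ⟪y, x⟫_ℂ = (starRingEnd ℂ) c := by rw [hc, ← inner_conj_symm]
  have hxx : ⟪x, x⟫_ℂ = 1 := by rw [inner_self_eq_norm_sq_to_K, hx]; norm_num
  have hyy : ⟪y, y⟫_ℂ = 1 := by rw [inner_self_eq_norm_sq_to_K, hy]; norm_num
  have hexp : ⟪y - lam • x, y - lam • x⟫_ℂ
      = 1 + (starRingEnd ℂ) lam * lam - lam * (starRingEnd ℂ) c - (starRingEnd ℂ) lam * c := by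
    simp only [inner_sub_left, inner_sub_right, inner_smul_left, inner_smul_right,
      hxx, hyy, hyx]
    ring
  have hn : ‖y - lam • x‖ ^ 2 = (⟪y - lam • x, y - lam • x⟫_ℂ).re := by
    rw [← inner_self_eq_norm_sq (𝕜 := ℂ), RCLike.re_to_complex]
  have hll : ((starRingEnd ℂ) lam * lam).re = ‖lam‖ ^ 2 := by
    rw [← Complex.normSq_eq_conj_mul_self]
    simp [Complex.normSq_eq_norm_sq, ← Complex.ofReal_pow]
  have hcross : (lam * (starRingEnd ℂ) c).re = ((starRingEnd ℂ) lam * c).re := by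
    have : lam * (starRingEnd ℂ) c = (starRingEnd ℂ) ((starRingEnd ℂ) lam * c) := by
      rw [map_mul, Complex.conj_conj]
    rw [this, Complex.conj_re]
  have hre : ‖y - lam • x‖ ^ 2 = 1 + ‖lam‖ ^ 2 - 2 * ((starRingEnd ℂ) lam * c).re := by
    rw [hn, hexp]
    simp only [Complex.add_re, Complex.sub_re, Complex.one_re, hll, hcross]
    ring
  have hb : ((starRingEnd ℂ) lam * c).re ≤ ‖lam‖ * ‖c‖ := by
    refine le_trans (Complex.re_le_norm _) ?_
    simp
  have hsq : 1 - ‖c‖ ^ 2 ≤ ‖y - lam • x‖ ^ 2 := by nlinarith [sq_nonneg (‖lam‖ - ‖c‖)]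
  calc Real.sqrt (1 - ‖c‖ ^ 2) ≤ Real.sqrt (‖y - lam • x‖ ^ 2) := Real.sqrt_le_sqrt hsq
    _ = ‖y - lam • x‖ := Real.sqrt_sq (norm_nonneg _)

theorem stmt1 {K : Type*} [NormedAddCommGroup K] [InnerProductSpace ℂ K] [CompleteSpace K]
    (x y : K) (hx : ‖x‖ = 1) (hy : ‖y‖ = 1) :
    ∃ U ∈ unitary (K →L[ℂ] K), U x = y ∧
      Metric.infDist U (Set.range fun lam : ℂ => lam • (1 : K →L[ℂ] K))
        = Real.sqrt (1 - ‖⟪x, y⟫_ℂ‖ ^ 2) ∧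
      ∀ V ∈ unitary (K →L[ℂ] K), V x = y →
        Real.sqrt (1 - ‖⟪x, y⟫_ℂ‖ ^ 2)
          ≤ Metric.infDist V (Set.range fun lam : ℂ => lam • (1 : K →L[ℂ] K)) := by
  obtain ⟨c, hcdef⟩ : ∃ c, c = ⟪x, y⟫_ℂ := ⟨_, rfl⟩
  rw [← hcdef]
  have hxx : ⟪x, x⟫_ℂ = 1 := by rw [inner_self_eq_norm_sq_to_K, hx]; norm_num
  have hyy : ⟪y, y⟫_ℂ = 1 := by rw [inner_self_eq_norm_sq_to_K, hy]; norm_num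
  have hyx : ⟪y, x⟫_ℂ = (starRingEnd ℂ) c := by rw [hcdef, ← inner_conj_symm]
  have hxw : ⟪x, y - c • x⟫_ℂ = 0 := by
    simp [inner_sub_right, inner_smul_right, hxx, ← hcdef, hx]
  have hww : ⟪y - c • x, y - c • x⟫_ℂ = 1 - (starRingEnd ℂ) c * c := by
    simp only [inner_sub_left, inner_sub_right, inner_smul_left, inner_smul_right,
      hxx, hyy, hyx, ← hcdef]
    ring
  have hn : ‖y - c • x‖ ^ 2 = (⟪y - c • x, y - c • x⟫_ℂ).re := by
    rw [← inner_self_eq_norm_sq (𝕜 := ℂ), RCLike.re_to_complex]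
  have hs2 : ‖y - c • x‖ ^ 2 = 1 - ‖c‖ ^ 2 := by
    have h := congrArg Complex.re hww
    rw [← hn, Complex.sub_re, Complex.one_re, conj_mul_re] at h
    exact h
  have hC0 : (0:ℝ) ≤ ‖c‖ := norm_nonneg c
  have hC1 : ‖c‖ ≤ 1 := by nlinarith [sq_nonneg ‖y - c • x‖]
  have hlow : ∀ V : K →L[ℂ] K, V x = y →
      Real.sqrt (1 - ‖c‖ ^ 2)
        ≤ Metric.infDist V (Set.range fun lam : ℂ => lam • (1 : K →L[ℂ] K)) := by
    intro V hV
    have := aux_lower x y hx hy V hV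
    rwa [← hcdef] at this
  by_cases hw0 : y - c • x = 0
  · -- degenerate case : y = c • x with ‖c‖ = 1
    have hC1' : ‖c‖ = 1 := by
      have h0 : ‖y - c • x‖ = 0 := by rw [hw0, norm_zero]
      nlinarith [hs2]
    have hcc : (starRingEnd ℂ) c * c = 1 := by
      have h1 : Complex.normSq c = 1 := by
        rw [Complex.normSq_eq_norm_sq, hC1']; norm_num
      rw [← Complex.normSq_eq_conj_mul_self, h1, Complex.ofReal_one]
    have hcc2 : c * (starRingEnd ℂ) c = 1 := by rw [mul_comm]; exact hcc
    refine ⟨c • 1, ?_, ?_, ?_, fun V _ hV => hlow V hV⟩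
    · rw [Unitary.mem_iff]
      constructor
      · simp [star_smul, smul_smul, smul_mul_assoc, mul_smul_comm, Complex.star_def, hcc, hcc2]
      · simp [star_smul, smul_smul, smul_mul_assoc, mul_smul_comm, Complex.star_def, hcc, hcc2]
    · rw [ContinuousLinearMap.smul_apply, ContinuousLinearMap.one_apply]
      exact (sub_eq_zero.mp hw0).symm
    · have h1 : (1 : ℝ) - ‖c‖ ^ 2 = 0 := by rw [hC1']; ring
      rw [h1, Real.sqrt_zero]
      exact Metric.infDist_zero_of_mem ⟨c, rfl⟩
  · -- main case

    obtain ⟨w, hwdef⟩ : ∃ w, w = y - c • x := ⟨_, rfl⟩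
    rw [← hwdef] at hxw hs2 hw0
    have hS0 : (0:ℝ) < ‖w‖ := norm_pos_iff.mpr hw0
    have hSc : ((‖w‖ : ℝ) : ℂ) ≠ 0 := by exact_mod_cast hS0.ne'
    -- ω
    obtain ⟨ω, hω, hc⟩ : ∃ ω : ℂ, ‖ω‖ = 1 ∧ c = ω * (‖c‖ : ℂ) := by
      by_cases h0 : c = 0
      · exact ⟨1, by simp, by simp [h0]⟩
      · refine ⟨c / (‖c‖ : ℂ), ?_, ?_⟩
        · rw [norm_div, Complex.norm_real, Real.norm_eq_abs, abs_norm]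
          exact div_self (norm_ne_zero_iff.mpr h0)
        · rw [div_mul_cancel₀]
          exact_mod_cast norm_ne_zero_iff.mpr h0
    have hωω : (starRingEnd ℂ) ω * ω = 1 := by
      have h1 : Complex.normSq ω = 1 := by
        rw [Complex.normSq_eq_norm_sq, hω]; norm_num
      rw [← Complex.normSq_eq_conj_mul_self, h1, Complex.ofReal_one]
    have hCSc : ((‖c‖ : ℝ) : ℂ) ^ 2 + ((‖w‖ : ℝ) : ℂ) ^ 2 = 1 := by
      have : ‖c‖ ^ 2 + ‖w‖ ^ 2 = (1:ℝ) := by linarith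
      exact_mod_cast this
    -- u
    obtain ⟨u, hudef⟩ : ∃ u, u = ((starRingEnd ℂ) ω * ((‖w‖ : ℝ) : ℂ)⁻¹) • w := ⟨_, rfl⟩
    have hxu : ⟪x, u⟫_ℂ = 0 := by simp [hudef, inner_smul_right, hxw]
    have hux : ⟪u, x⟫_ℂ = 0 := by rw [← inner_conj_symm, hxu, map_zero]
    have hwwc : ⟪w, w⟫_ℂ = ((‖w‖ : ℝ) : ℂ) ^ 2 := by
      exact inner_self_eq_norm_sq_to_K w
    have huu : ⟪u, u⟫_ℂ = 1 := by
      rw [hudef, inner_smul_left, inner_smul_right, hwwc]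
      simp only [map_mul, Complex.conj_conj, map_inv₀, Complex.conj_ofReal]
      field_simp
      linear_combination hωω
    have hu' : ‖u‖ = 1 := by
      have h1 : ‖u‖ ^ 2 = (⟪u, u⟫_ℂ).re := by
        rw [← inner_self_eq_norm_sq (𝕜 := ℂ), RCLike.re_to_complex]
      rw [huu, Complex.one_re] at h1
      nlinarith [norm_nonneg u]
    have hyu : y = c • x + (ω * ((‖w‖ : ℝ) : ℂ)) • u := by
      have hk : ω * ((‖w‖ : ℝ) : ℂ) * ((starRingEnd ℂ) ω * ((‖w‖ : ℝ) : ℂ)⁻¹) = 1 := by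
        field_simp
        linear_combination hωω
      rw [hudef, smul_smul, hk, one_smul, hwdef]
      abel
    -- the operator U and its inverse A
    obtain ⟨v₁, hv1⟩ : ∃ v₁, v₁ = (ω * (((‖c‖:ℝ):ℂ) - 1)) • x + (ω * ((‖w‖:ℝ):ℂ)) • u := ⟨_, rfl⟩
    obtain ⟨v₂, hv2⟩ : ∃ v₂, v₂ = (-(ω * ((‖w‖:ℝ):ℂ))) • x + (ω * (((‖c‖:ℝ):ℂ) - 1)) • u := ⟨_, rfl⟩
    obtain ⟨v₃, hv3⟩ : ∃ v₃, v₃ = ((starRingEnd ℂ) ω * (((‖c‖:ℝ):ℂ) - 1)) • x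
        + (-((starRingEnd ℂ) ω * ((‖w‖:ℝ):ℂ))) • u := ⟨_, rfl⟩
    obtain ⟨v₄, hv4⟩ : ∃ v₄, v₄ = ((starRingEnd ℂ) ω * ((‖w‖:ℝ):ℂ)) • x
        + ((starRingEnd ℂ) ω * (((‖c‖:ℝ):ℂ) - 1)) • u := ⟨_, rfl⟩
    obtain ⟨U, hUdef⟩ : ∃ U : K →L[ℂ] K,
        U = ω • 1 + (innerSL ℂ x).smulRight v₁ + (innerSL ℂ u).smulRight v₂ := ⟨_, rfl⟩
    obtain ⟨A, hAdef⟩ : ∃ A : K →L[ℂ] K,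
        A = (starRingEnd ℂ) ω • 1 + (innerSL ℂ x).smulRight v₃ + (innerSL ℂ u).smulRight v₄ := ⟨_, rfl⟩
    have hUapp : ∀ z, U z = ω • z + ⟪x, z⟫_ℂ • v₁ + ⟪u, z⟫_ℂ • v₂ := by
      intro z; simp [hUdef]
    have hAapp : ∀ z, A z = (starRingEnd ℂ) ω • z + ⟪x, z⟫_ℂ • v₃ + ⟪u, z⟫_ℂ • v₄ := by
      intro z; simp [hAdef]
    have hUx : U x = y := by
      rw [hUapp, hxx, hux, hyu, hc, hv1, hv2]
      module
    have hUA : ∀ z, U (A z) = z := by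
      intro z
      rw [hAapp, hUapp]
      simp only [inner_add_right, inner_smul_right, hv3, hv4, inner_add_right, inner_smul_right,
        hxx, huu, hxu, hux, hv1, hv2]
      match_scalars
      · linear_combination hωω
      · linear_combination ((starRingEnd ℂ) ω * ω * ⟪x, z⟫_ℂ) * hCSc
      · linear_combination ((starRingEnd ℂ) ω * ω * ⟪u, z⟫_ℂ) * hCSc
    have hiso : ∀ v z, ⟪U v, U z⟫_ℂ = ⟪v, z⟫_ℂ := by
      intro v z
      rw [hUapp, hUapp]
      simp only [inner_add_left, inner_add_right, inner_smul_left, inner_smul_right, hv1, hv2,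
        hxx, huu, hxu, hux, inner_conj_symm, map_mul, map_neg, map_sub, map_one,
        Complex.conj_ofReal]
      linear_combination ⟪v, z⟫_ℂ * hωω
        + ((starRingEnd ℂ) ω * ω * (⟪v, x⟫_ℂ * ⟪x, z⟫_ℂ + ⟪v, u⟫_ℂ * ⟪u, z⟫_ℂ)) * hCSc
    -- unitarity
    have hadj : star U * U = 1 := by
      rw [ContinuousLinearMap.star_eq_adjoint]
      ext z
      refine ext_inner_left ℂ fun v => ?_
      simp only [ContinuousLinearMap.mul_apply, ContinuousLinearMap.one_apply,
        ContinuousLinearMap.adjoint_inner_right]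
      exact hiso v z
    have hUAop : U * A = 1 := by
      ext z
      rw [ContinuousLinearMap.mul_apply, ContinuousLinearMap.one_apply]
      exact hUA z
    have hstarA : star U = A := by
      rw [← mul_one (star U), ← hUAop, ← mul_assoc, hadj, one_mul]
    have hmem : U ∈ unitary (K →L[ℂ] K) := Unitary.mem_iff.mpr
      ⟨hadj, by rw [hstarA]; exact hUAop⟩
    -- norm bound
    have hnorm : ∀ z, ‖U z - c • z‖ ≤ ‖w‖ * ‖z‖ := by
      intro z
      obtain ⟨p, hpdef⟩ : ∃ p, p = z - ⟪x, z⟫_ℂ • x - ⟪u, z⟫_ℂ • u := ⟨_, rfl⟩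
      have hxp : ⟪x, p⟫_ℂ = 0 := by
        simp [hpdef, inner_sub_right, inner_smul_right, hxx, hxu, hx]
      have hup : ⟪u, p⟫_ℂ = 0 := by
        simp [hpdef, inner_sub_right, inner_smul_right, hux, huu, hu']
      obtain ⟨e₁, he1⟩ : ∃ e₁, e₁ = (-((‖w‖:ℝ):ℂ) * ⟪u, z⟫_ℂ) • x := ⟨_, rfl⟩
      obtain ⟨e₂, he2⟩ : ∃ e₂, e₂ = (((‖w‖:ℝ):ℂ) * ⟪x, z⟫_ℂ) • u := ⟨_, rfl⟩
      obtain ⟨e₃, he3⟩ : ∃ e₃, e₃ = ((1:ℂ) - ((‖c‖:ℝ):ℂ)) • p := ⟨_, rfl⟩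
      have hD : U z - c • z = ω • (e₁ + e₂ + e₃) := by
        rw [hUapp, hc, hv1, hv2, he1, he2, he3, hpdef]
        match_scalars <;> ring
      have hno : ‖U z - c • z‖ = ‖e₁ + e₂ + e₃‖ := by
        rw [hD, norm_smul, hω, one_mul]
      have h12 : ⟪e₁, e₂⟫_ℂ = 0 := by
        simp [he1, he2, inner_smul_left, inner_smul_right, hxu]
      have h13 : ⟪e₁, e₃⟫_ℂ = 0 := by
        simp [he1, he3, inner_smul_left, inner_smul_right, hxp]
      have h23 : ⟪e₂, e₃⟫_ℂ = 0 := by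
        simp [he2, he3, inner_smul_left, inner_smul_right, hup]
      have htr := norm_sq_triple e₁ e₂ e₃ h12 h13 h23
      have hn1 : ‖e₁‖ = ‖w‖ * ‖⟪u, z⟫_ℂ‖ := by
        rw [he1, norm_smul, hx, mul_one, norm_mul, norm_neg, Complex.norm_real,
          Real.norm_eq_abs, abs_norm]
      have hn2 : ‖e₂‖ = ‖w‖ * ‖⟪x, z⟫_ℂ‖ := by
        rw [he2, norm_smul, hu', mul_one, norm_mul, Complex.norm_real, Real.norm_eq_abs, abs_norm]
      have hn3 : ‖e₃‖ = (1 - ‖c‖) * ‖p‖ := by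
        rw [he3, norm_smul]
        congr 1
        rw [show (1:ℂ) - ((‖c‖:ℝ):ℂ) = (((1 - ‖c‖ : ℝ)):ℂ) by push_cast; ring,
          Complex.norm_real, Real.norm_eq_abs, abs_of_nonneg (by linarith)]
      have hz : z = ⟪x, z⟫_ℂ • x + ⟪u, z⟫_ℂ • u + p := by
        rw [hpdef]; module
      have hzx : ⟪⟪x, z⟫_ℂ • x, ⟪u, z⟫_ℂ • u⟫_ℂ = 0 := by
        simp [inner_smul_left, inner_smul_right, hxu]
      have hzx2 : ⟪⟪x, z⟫_ℂ • x, p⟫_ℂ = 0 := by simp [inner_smul_left, hxp]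
      have hzx3 : ⟪⟪u, z⟫_ℂ • u, p⟫_ℂ = 0 := by simp [inner_smul_left, hup]
      have hzn : ‖z‖ ^ 2 = ‖⟪x, z⟫_ℂ‖ ^ 2 + ‖⟪u, z⟫_ℂ‖ ^ 2 + ‖p‖ ^ 2 := by
        conv_lhs => rw [hz]
        rw [norm_sq_triple _ _ _ hzx hzx2 hzx3, norm_smul, norm_smul, hx, hu']
        ring
      have hDsq : ‖U z - c • z‖ ^ 2 = (‖w‖ * ‖⟪u, z⟫_ℂ‖) ^ 2 + (‖w‖ * ‖⟪x, z⟫_ℂ‖) ^ 2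
          + ((1 - ‖c‖) * ‖p‖) ^ 2 := by rw [hno, htr, hn1, hn2, hn3]
      exact real_ineq hS0.le hC0 hC1 hs2 (norm_nonneg p) (norm_nonneg _) (norm_nonneg z) hDsq hzn
    have hop : ‖U - c • 1‖ ≤ ‖w‖ := by
      refine opNorm_le_bound _ hS0.le fun z => ?_
      rw [ContinuousLinearMap.sub_apply, ContinuousLinearMap.smul_apply,
        ContinuousLinearMap.one_apply]
      exact hnorm z
    have hsqrtw : Real.sqrt (1 - ‖c‖ ^ 2) = ‖w‖ := by
      rw [← hs2, Real.sqrt_sq (norm_nonneg w)]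
    refine ⟨U, hmem, hUx, ?_, fun V _ hV => hlow V hV⟩
    refine le_antisymm ?_ (hlow U hUx)
    rw [hsqrtw]
    refine le_trans (Metric.infDist_le_dist_of_mem ⟨c, rfl⟩) ?_
    rw [dist_eq_norm]
    exact hop
end

section
/- Let W be a unitary on a Hilbert space K and let x, y be unit vectors with Wx = y. Let P be a positive (self-adjoint, nonnegative) operator on K. Then ‖W - P‖ ≥ √(1 - (Re⟨x, y⟩)²). -/
open scoped InnerProductSpace

set_option maxHeartbeats 1000000 in
theorem stmt2 {K : Type*} [NormedAddCommGroup K] [InnerProductSpace ℂ K] [CompleteSpace K]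
    (W : K →L[ℂ] K) (hW : W ∈ unitary (K →L[ℂ] K))
    (x y : K) (hx : ‖x‖ = 1) (hy : ‖y‖ = 1) (hWx : W x = y)
    (P : K →L[ℂ] K) (hP : P.IsPositive) :
    Real.sqrt (1 - (⟪x, y⟫_ℂ).re ^ 2) ≤ ‖W - P‖ := by
  set c : ℝ := (⟪x, y⟫_ℂ).re with hc
  rcases le_or_gt (1 - c ^ 2) 0 with h0 | h0
  · rw [Real.sqrt_eq_zero_of_nonpos h0]; exact norm_nonneg _
  set s : ℝ := Real.sqrt (1 - c ^ 2) with hsdef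
  have hs : 0 < s := Real.sqrt_pos.mpr h0
  have hs2 : s ^ 2 = 1 - c ^ 2 := Real.sq_sqrt h0.le
  by_contra hcon
  push_neg at hcon
  have hx0 : x ≠ 0 := by
    intro h; rw [h, norm_zero] at hx; exact zero_ne_one hx
  haveI : Nontrivial K := ⟨x, 0, hx0⟩
  haveI : Nontrivial (K →L[ℂ] K) :=
    ⟨1, 0, fun h => hx0 (by simpa using DFunLike.congr_fun h x)⟩
  have hWmem := Unitary.mem_iff.mp hW
  haveI hWn : IsStarNormal W := ⟨by rw [Commute, SemiconjBy, hWmem.1, hWmem.2]⟩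
  have hxx : ⟪x, x⟫_ℂ = 1 := by
    rw [inner_self_eq_norm_sq_to_K, hx]; norm_num
  -- find l in spectrum of W with minimal real part
  obtain ⟨l, hlS, hlmin⟩ := (spectrum.isCompact (𝕜 := ℂ) W).exists_isMinOn
    (spectrum.nonempty W) (Complex.continuous_re.continuousOn)
  rw [isMinOn_iff] at hlmin
  have hl1 : ‖l‖ = 1 :=
    mem_sphere_zero_iff_norm.mp (spectrum.subset_circle_of_unitary hW hlS)
  -- Re l ≤ c
  have hlc : l.re ≤ c := by
    by_contra hlt
    push_neg at hlt
    set B : K →L[ℂ] K := (2⁻¹ : ℂ) • (W + star W) - (l.re : ℂ) • 1 with hBdef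
    have heq : cfc (fun z : ℂ => ((z.re - l.re : ℝ) : ℂ)) W = B := by
      have h1 : cfc (fun z : ℂ => ((z.re - l.re : ℝ) : ℂ)) W
          = cfc (fun z : ℂ => (2⁻¹ : ℂ) * (z + star z) - (l.re : ℂ)) W := by
        apply cfc_congr
        intro z hz
        simp only [Complex.star_def, Complex.add_conj]
        push_cast
        ring
      rw [h1, cfc_sub _ _ W (by fun_prop) (by fun_prop),
        cfc_const_mul _ _ W (by fun_prop),
        cfc_add W _ _ (by fun_prop) (by fun_prop),
        cfc_star_id (a := W) (ha := hWn), cfc_id' ℂ W, cfc_const _ W,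
        Algebra.algebraMap_eq_smul_one]
    have hBsa : IsSelfAdjoint B := by
      rw [hBdef]
      rw [IsSelfAdjoint, star_sub, star_smul, star_add, star_star, star_smul, star_one]
      simp only [Complex.star_def, map_inv₀, Complex.conj_ofReal]
      rw [add_comm (star W) W, map_ofNat]
    have hB : (0 : K →L[ℂ] K) ≤ B := by
      rw [StarOrderedRing.nonneg_iff_spectrum_nonneg (R := ℝ) B hBsa]
      intro t ht
      have h1 : (t : ℂ) ∈ spectrum ℂ B := spectrum.algebraMap_mem ℂ ht
      rw [← heq, cfc_map_spectrum (R := ℂ) _ W hWn (by fun_prop)] at h1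
      obtain ⟨z, hz, hzeq⟩ := h1
      have h2 : ((z.re - l.re : ℝ) : ℂ) = (t : ℂ) := hzeq
      have : z.re - l.re = t := by exact_mod_cast h2
      rw [← this]
      exact sub_nonneg.mpr (hlmin z hz)
    have hpos := (ContinuousLinearMap.nonneg_iff_isPositive _).mp hB
    have hineq := hpos.inner_nonneg_left x
    have hval : ⟪B x, x⟫_ℂ = ((c - l.re : ℝ) : ℂ) := by
      rw [hBdef]
      rw [ContinuousLinearMap.sub_apply, ContinuousLinearMap.smul_apply,
        ContinuousLinearMap.smul_apply, ContinuousLinearMap.add_apply,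
        ContinuousLinearMap.one_apply, ContinuousLinearMap.star_eq_adjoint,
        inner_sub_left, inner_smul_left, inner_smul_left, inner_add_left,
        ContinuousLinearMap.adjoint_inner_left, hWx, hxx, ← inner_conj_symm y x]
      have : (starRingEnd ℂ) ⟪x, y⟫_ℂ + ⟪x, y⟫_ℂ = 2 * c := by
        rw [add_comm, Complex.add_conj]; norm_num; exact hc.symm
      rw [this]
      simp only [map_inv₀, Complex.conj_ofReal, mul_one]
      rw [map_ofNat]
      push_cast
      ring
    rw [hval] at hineq
    have : (0:ℝ) ≤ c - l.re := by exact Complex.zero_le_real.mp hineq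
    linarith
  -- spectrum of P is nonnegative real
  have hPsa : IsSelfAdjoint P := hP.isSelfAdjoint
  haveI : IsStarNormal P := hPsa.isStarNormal
  have hP0 : (0 : K →L[ℂ] K) ≤ P := (ContinuousLinearMap.nonneg_iff_isPositive P).mpr hP
  have hPspec : ∀ z ∈ spectrum ℂ P, z = (z.re : ℂ) ∧ 0 ≤ z.re := by
    intro z hz
    have hzre : z = (z.re : ℂ) := hPsa.mem_spectrum_eq_re hz
    refine ⟨hzre, ?_⟩
    have h1 : (z.re : ℂ) ∈ spectrum ℂ P := hzre ▸ hz
    have hmem : z.re ∈ spectrum ℝ P := by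
      have h2 : algebraMap ℝ ℂ z.re ∈ spectrum ℂ P := by
        rwa [Complex.coe_algebraMap]
      exact (spectrum.algebraMap_mem_iff ℂ).mp h2
    exact spectrum_nonneg_of_nonneg hP0 hmem
  -- key scalar bound : s ≤ ‖l - z‖ on spectrum of P
  have hkey : ∀ z ∈ spectrum ℂ P, s ≤ ‖l - z‖ := by
    intro z hz
    obtain ⟨hzre, hz0⟩ := hPspec z hz
    have hzim : z.im = 0 := by rw [hzre]; simp
    have hnormsq : ‖l - z‖ ^ 2 = (l.re - z.re) ^ 2 + l.im ^ 2 := by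
      rw [Complex.sq_norm, Complex.normSq_apply,
        Complex.sub_re, Complex.sub_im, hzim]
      ring
    have hl2 : l.re ^ 2 + l.im ^ 2 = 1 := by
      have h1 : ‖l‖ ^ 2 = 1 := by rw [hl1]; norm_num
      rw [Complex.sq_norm, Complex.normSq_apply] at h1
      linarith [h1]
    have hsq : s ^ 2 ≤ ‖l - z‖ ^ 2 := by
      rw [hnormsq, hs2]
      rcases le_or_gt l.re 0 with ht | ht
      · nlinarith [sq_nonneg (l.re - z.re), mul_nonneg (neg_nonneg.mpr ht) hz0,
          sq_nonneg c]
      · nlinarith [sq_nonneg (l.re - z.re), sq_nonneg (l.re + c)]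
    calc s = Real.sqrt (s ^ 2) := (Real.sqrt_sq hs.le).symm
      _ ≤ Real.sqrt (‖l - z‖ ^ 2) := Real.sqrt_le_sqrt hsq
      _ = ‖l - z‖ := Real.sqrt_sq (norm_nonneg _)
  have hne : ∀ z ∈ spectrum ℂ P, l - z ≠ 0 := by
    intro z hz h
    have := hkey z hz
    rw [h, norm_zero] at this
    linarith
  have hcont : ContinuousOn (fun z : ℂ => (l - z)⁻¹) (spectrum ℂ P) :=
    ContinuousOn.inv₀ (by fun_prop) hne
  set V : K →L[ℂ] K := cfc (fun z : ℂ => (l - z)⁻¹) P with hVdef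
  have hlP : l • (1 : K →L[ℂ] K) - P = cfc (fun z : ℂ => l - z) P := by
    rw [cfc_sub _ _ P (by fun_prop) (by fun_prop), cfc_const _ P, cfc_id' ℂ P,
      Algebra.algebraMap_eq_smul_one]
  have hV1 : V * (l • (1 : K →L[ℂ] K) - P) = 1 := by
    rw [hlP, hVdef, ← cfc_mul _ _ P hcont (by fun_prop)]
    rw [show (fun z : ℂ => (l - z)⁻¹ * (l - z)) = fun z => (l - z)⁻¹ * (l - z) from rfl]
    rw [cfc_congr (g := fun _ : ℂ => (1 : ℂ)) fun z hz => inv_mul_cancel₀ (hne z hz)]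
    exact cfc_const_one ℂ P
  have hV2 : (l • (1 : K →L[ℂ] K) - P) * V = 1 := by
    rw [hlP, hVdef, ← cfc_mul _ _ P (by fun_prop) hcont]
    rw [cfc_congr (g := fun _ : ℂ => (1 : ℂ)) fun z hz => mul_inv_cancel₀ (hne z hz)]
    exact cfc_const_one ℂ P
  have hVnorm : ‖V‖ ≤ s⁻¹ := by
    refine norm_cfc_le (by positivity) fun z hz => ?_
    rw [norm_inv]
    exact inv_anti₀ hs (hkey z hz)
  have hsmall : ‖V * (W - P)‖ < 1 := by
    calc ‖V * (W - P)‖ ≤ ‖V‖ * ‖W - P‖ := norm_mul_le _ _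
      _ ≤ s⁻¹ * ‖W - P‖ := by
        apply mul_le_mul_of_nonneg_right hVnorm (norm_nonneg _)
      _ < s⁻¹ * s := by
        apply mul_lt_mul_of_pos_left hcon (by positivity)
      _ = 1 := inv_mul_cancel₀ hs.ne'
  have hunit2 : IsUnit (1 - V * (W - P)) := isUnit_one_sub_of_norm_lt_one hsmall
  have hunit1 : IsUnit (l • (1 : K →L[ℂ] K) - P) :=
    ⟨⟨l • (1 : K →L[ℂ] K) - P, V, hV2, hV1⟩, rfl⟩
  have hfact : (l • (1 : K →L[ℂ] K) - P) * (1 - V * (W - P))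
      = l • (1 : K →L[ℂ] K) - W := by
    rw [mul_sub, mul_one, ← mul_assoc, hV2, one_mul]
    abel
  have : IsUnit (l • (1 : K →L[ℂ] K) - W) := hfact ▸ hunit1.mul hunit2
  rw [spectrum.mem_iff] at hlS
  exact hlS (by rwa [Algebra.algebraMap_eq_smul_one])
end

section
/- Let W be a unitary operator on a Hilbert space K. If some λ in the spectrum of W has Re(λ) ≤ 0, then for every positive operator P on K, ‖W - P‖ ≥ 1. -/
open ContinuousLinearMap in
/-- For unitary `W` and `lam` on the unit circle, `lam • 1 - W` and its adjoint
have equal norms pointwise. -/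
lemma stmt3_aux_norm_eq {K : Type*} [NormedAddCommGroup K] [InnerProductSpace ℂ K]
    [CompleteSpace K] (W : K →L[ℂ] K) (hW : W ∈ unitary (K →L[ℂ] K))
    (lam : ℂ) (hlam : ‖lam‖ = 1) (x : K) :
    ‖(adjoint (lam • (1 : K →L[ℂ] K) - W)) x‖ = ‖(lam • (1 : K →L[ℂ] K) - W) x‖ := by
  have hWW : star W * W = 1 := hW.1
  have hstar : star W ∈ unitary (K →L[ℂ] K) := Unitary.star_mem hW
  have hmul : lam * starRingEnd ℂ lam = 1 := by
    have := Complex.mul_conj lam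
    rw [this]
    norm_cast
    rw [Complex.normSq_eq_norm_sq]
    simp [hlam]
  have h1 : ‖(lam • (1 : K →L[ℂ] K) - W) x‖ = ‖lam • ((star W) x) - x‖ := by
    rw [← (star W).norm_map_of_mem_unitary hstar ((lam • (1 : K →L[ℂ] K) - W) x)]
    congr 1
    have : (star W) (W x) = x := by
      have := congrArg (fun (T : K →L[ℂ] K) => T x) hWW
      simpa [ContinuousLinearMap.mul_apply] using this
    simp [map_sub, map_smul, this]
  have h2 : adjoint (lam • (1 : K →L[ℂ] K) - W) = (starRingEnd ℂ lam) • 1 - star W := by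
    rw [← ContinuousLinearMap.star_eq_adjoint]
    simp [star_sub, star_smul]
  rw [h1, h2]
  have h3 : ((starRingEnd ℂ lam) • (1 : K →L[ℂ] K) - star W) x
      = (starRingEnd ℂ lam) • x - (star W) x := by simp
  rw [h3]
  have h4 : lam • ((starRingEnd ℂ lam) • x - (star W) x) = x - lam • (star W) x := by
    rw [smul_sub, smul_smul, hmul, one_smul]
  calc ‖(starRingEnd ℂ lam) • x - (star W) x‖
      = ‖lam • ((starRingEnd ℂ lam) • x - (star W) x)‖ := by rw [norm_smul, hlam, one_mul]
    _ = ‖x - lam • (star W) x‖ := by rw [h4]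
    _ = ‖lam • (star W) x - x‖ := norm_sub_rev _ _

theorem stmt3 {K : Type*} [NormedAddCommGroup K] [InnerProductSpace ℂ K] [CompleteSpace K]
    (W : K →L[ℂ] K) (hW : W ∈ unitary (K →L[ℂ] K))
    (lam : ℂ) (hlam : lam ∈ spectrum ℂ W) (hre : lam.re ≤ 0) :
    ∀ P : K →L[ℂ] K, P.IsPositive → 1 ≤ ‖W - P‖ := by
  intro P hP
  -- |lam| = 1
  have hlam1 : ‖lam‖ = 1 := by
    have := spectrum.subset_circle_of_unitary hW hlam
    simpa using this
  set T : K →L[ℂ] K := lam • (1 : K →L[ℂ] K) - W with hTdef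
  -- T is not bijective
  have hT_not_unit : ¬ IsUnit T := by
    have := spectrum.mem_iff.mp hlam
    simpa [hTdef, Algebra.algebraMap_eq_smul_one] using this
  have hT_not_bij : ¬ Function.Bijective T := by
    rw [← ContinuousLinearMap.isUnit_iff_bijective]; exact hT_not_unit
  -- T is not bounded below
  have hanti : ¬ ∃ c, AntilipschitzWith c T := by
    rintro ⟨c, hc⟩
    apply hT_not_bij
    rw [T.bijective_iff_dense_range_and_antilipschitz]
    refine ⟨?_, c, hc⟩
    rw [Submodule.topologicalClosure_eq_top_iff]
    rw [Submodule.eq_bot_iff]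
    intro x hx
    have hadj : ContinuousLinearMap.adjoint T x = 0 := by
      apply ext_inner_right ℂ
      intro y
      have : inner ℂ (T y) x = (0 : ℂ) := hx (T y) ⟨y, rfl⟩
      rw [ContinuousLinearMap.adjoint_inner_left]
      rw [← inner_conj_symm, this]
      simp
    have : ‖T x‖ = 0 := by
      rw [← stmt3_aux_norm_eq W hW lam hlam1 x, hadj, norm_zero]
    have hTx : T x = 0 := by simpa using this
    have : T x = T 0 := by simpa using hTx
    exact hc.injective this
  -- by contradiction
  by_contra hcon
  push_neg at hcon
  set ε : ℝ := 1 - ‖W - P‖ with hεdef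
  have hε : 0 < ε := by linarith
  -- find approximate eigenvector
  have hex : ∃ x : K, (ε⁻¹ : ℝ) * ‖T x‖ < ‖x‖ := by
    by_contra hno
    push_neg at hno
    apply hanti
    refine ⟨⟨ε⁻¹, by positivity⟩, T.antilipschitz_of_bound ?_⟩
    intro x
    exact_mod_cast hno x
  obtain ⟨x, hx⟩ := hex
  have hxne : x ≠ 0 := by
    intro h; rw [h] at hx; simp at hx
  have hxpos : 0 < ‖x‖ := norm_pos_iff.mpr hxne
  set u : K := ((‖x‖ : ℂ))⁻¹ • x with hudef
  have hu1 : ‖u‖ = 1 := by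
    rw [hudef, norm_smul, norm_inv, Complex.norm_real, Real.norm_eq_abs,
      abs_of_pos hxpos, inv_mul_cancel₀ hxpos.ne']
  have hTu : ‖T u‖ < ε := by
    rw [hudef, map_smul, norm_smul, norm_inv, Complex.norm_real, Real.norm_eq_abs,
      abs_of_pos hxpos, inv_mul_lt_iff₀ hxpos]
    have := (inv_mul_lt_iff₀ hε).mp hx
    linarith
  -- the numerical value p = ⟪u, Pu⟫ is a nonnegative real
  set p : ℝ := (inner ℂ u (P u) : ℂ).re with hpdef
  have hp0 : 0 ≤ p := by
    have h := (Complex.le_def.mp (hP.inner_nonneg_right u)).1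
    rw [Complex.zero_re] at h
    exact h
  have hpC : (inner ℂ u (P u) : ℂ) = (p : ℂ) := by
    have hsa : (starRingEnd ℂ) (inner ℂ u (P u) : ℂ) = inner ℂ u (P u) := by
      rw [inner_conj_symm]
      nth_rewrite 1 [← hP.isSelfAdjoint.adjoint_eq]
      rw [ContinuousLinearMap.adjoint_inner_left]
    exact (Complex.conj_eq_iff_re.mp hsa).symm
  -- |lam - p| ≥ 1
  have hkey : 1 ≤ ‖lam - (p : ℂ)‖ := by
    have h1 : ‖lam - (p : ℂ)‖ ^ 2 = (lam.re - p) ^ 2 + lam.im ^ 2 := by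
      rw [Complex.sq_norm, Complex.normSq_apply]
      simp [Complex.sub_re, Complex.sub_im]
      ring
    have h2 : lam.re ^ 2 + lam.im ^ 2 = 1 := by
      have h := Complex.sq_norm lam
      rw [Complex.normSq_apply, hlam1] at h
      nlinarith
    nlinarith [norm_nonneg (lam - (p : ℂ))]
  -- |⟪u, Wu⟫ - lam| ≤ ‖Tu‖
  have hz : ‖(inner ℂ u (W u) : ℂ) - lam‖ ≤ ‖T u‖ := by
    have : (inner ℂ u (W u) : ℂ) - lam = - inner ℂ u (T u) := by
      simp only [hTdef, ContinuousLinearMap.sub_apply, ContinuousLinearMap.smul_apply,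
        ContinuousLinearMap.one_apply, inner_sub_right, inner_smul_right]
      have huu : (inner ℂ u u : ℂ) = 1 := by
        rw [inner_self_eq_norm_sq_to_K, hu1]; norm_num
      rw [huu]; ring
    rw [this, norm_neg]
    calc ‖(inner ℂ u (T u) : ℂ)‖ ≤ ‖u‖ * ‖T u‖ := norm_inner_le_norm u (T u)
    _ = ‖T u‖ := by rw [hu1, one_mul]
  -- main chain
  have hmain : 1 - ‖T u‖ ≤ ‖W - P‖ := by
    have hc1 : ‖(inner ℂ u ((W - P) u) : ℂ)‖ ≤ ‖W - P‖ := by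
      calc ‖(inner ℂ u ((W - P) u) : ℂ)‖ ≤ ‖u‖ * ‖(W - P) u‖ := norm_inner_le_norm _ _
      _ ≤ ‖u‖ * (‖W - P‖ * ‖u‖) := by
          apply mul_le_mul_of_nonneg_left ((W - P).le_opNorm u) (norm_nonneg u)
      _ = ‖W - P‖ := by rw [hu1]; ring
    have hc2 : 1 - ‖T u‖ ≤ ‖(inner ℂ u ((W - P) u) : ℂ)‖ := by
      have heq : (inner ℂ u ((W - P) u) : ℂ)
          = (lam - (p : ℂ)) + ((inner ℂ u (W u) : ℂ) - lam) := by
        simp only [ContinuousLinearMap.sub_apply, inner_sub_right]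
        rw [hpC]; ring
      rw [heq]
      calc 1 - ‖T u‖ ≤ ‖lam - (p:ℂ)‖ - ‖(inner ℂ u (W u) : ℂ) - lam‖ := by
            have := hz; linarith [hkey]
      _ ≤ ‖(lam - (p : ℂ)) + ((inner ℂ u (W u) : ℂ) - lam)‖ := by
            have h := norm_sub_norm_le (lam - (p:ℂ)) (-(((inner ℂ u (W u):ℂ)) - lam))
            simp only [norm_neg, sub_neg_eq_add] at h
            exact h
    linarith
  -- contradiction
  rw [hεdef] at hTu
  linarith
end

section
/- Let U be a unitary on a Hilbert space with U + U* ≥ 2rI for some 0 < r < 1. Then the distance from U to the scalar operators satisfies d(U, ℂI) ≤ √(1 - r²). -/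
theorem stmt10 {K : Type*} [NormedAddCommGroup K] [InnerProductSpace ℂ K] [CompleteSpace K]
    (U : K →L[ℂ] K) (hU : U ∈ unitary (K →L[ℂ] K)) (r : ℝ) (hr0 : 0 < r) (hr1 : r < 1)
    (hpos : (U + star U - ((2 * r : ℝ) : ℂ) • (1 : K →L[ℂ] K)).IsPositive) :
    Metric.infDist U (Set.range fun lam : ℂ => lam • (1 : K →L[ℂ] K))
      ≤ Real.sqrt (1 - r ^ 2) := by
  have hmem : ((r : ℂ) • (1 : K →L[ℂ] K)) ∈
      Set.range fun lam : ℂ => lam • (1 : K →L[ℂ] K) := ⟨(r : ℂ), rfl⟩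
  have hkey : ∀ x : K, ‖(U - (r : ℂ) • 1) x‖ ≤ Real.sqrt (1 - r ^ 2) * ‖x‖ := by
    intro x
    have hnormU : ‖U x‖ = ‖x‖ := U.norm_map_of_mem_unitary hU x
    -- Re ⟪U x, x⟫ ≥ r ‖x‖²
    have hpos' := hpos.2 x
    have hadj : ((star U) x : K) = ContinuousLinearMap.adjoint U x := by
      rw [ContinuousLinearMap.star_eq_adjoint]
    have hre : RCLike.re (inner ℂ ((star U) x) x : ℂ) = RCLike.re (inner ℂ (U x) x : ℂ) := by
      rw [hadj, ContinuousLinearMap.adjoint_inner_left]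
      exact inner_re_symm x (U x)
    have hlow : r * ‖x‖ ^ 2 ≤ RCLike.re (inner ℂ (U x) x : ℂ) := by
      have hexp : RCLike.re (inner ℂ ((U + star U - ((2 * r : ℝ) : ℂ) • (1 : K →L[ℂ] K)) x) x : ℂ)
          = RCLike.re (inner ℂ (U x) x : ℂ) + RCLike.re (inner ℂ ((star U) x) x : ℂ)
            - 2 * r * ‖x‖ ^ 2 := by
        simp [ContinuousLinearMap.sub_apply, ContinuousLinearMap.add_apply,
          ContinuousLinearMap.smul_apply, inner_sub_left, inner_add_left, inner_smul_left,
          inner_self_eq_norm_sq]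
        rw [← Complex.ofReal_pow, Complex.ofReal_re, mul_comm]
      have := hpos'
      rw [ContinuousLinearMap.reApplyInnerSelf] at this
      rw [hexp, hre] at this
      nlinarith
    have hsq : ‖(U - (r : ℂ) • 1) x‖ ^ 2 ≤ (1 - r ^ 2) * ‖x‖ ^ 2 := by
      have happ : (U - (r : ℂ) • 1) x = U x - (r : ℂ) • x := by
        simp [ContinuousLinearMap.sub_apply]
      rw [happ, @norm_sub_sq ℂ]
      have h1 : RCLike.re (inner ℂ (U x) ((r : ℂ) • x) : ℂ) = r * RCLike.re (inner ℂ (U x) x : ℂ) := by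
        rw [inner_smul_right]
        simp
      rw [h1, norm_smul, hnormU]
      simp only [Complex.norm_real, Real.norm_eq_abs, abs_of_pos hr0]
      nlinarith
    have h2 : 0 ≤ Real.sqrt (1 - r ^ 2) * ‖x‖ := by positivity
    nlinarith [Real.sq_sqrt (by nlinarith : (0:ℝ) ≤ 1 - r ^ 2), norm_nonneg ((U - (r : ℂ) • 1) x),
      Real.sqrt_nonneg (1 - r ^ 2), norm_nonneg x]
  have hnorm : ‖U - (r : ℂ) • (1 : K →L[ℂ] K)‖ ≤ Real.sqrt (1 - r ^ 2) :=
    ContinuousLinearMap.opNorm_le_bound _ (Real.sqrt_nonneg _) hkey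
  calc Metric.infDist U (Set.range fun lam : ℂ => lam • (1 : K →L[ℂ] K))
      ≤ dist U ((r : ℂ) • (1 : K →L[ℂ] K)) := Metric.infDist_le_dist_of_mem hmem
    _ = ‖U - (r : ℂ) • (1 : K →L[ℂ] K)‖ := by rw [dist_eq_norm]
    _ ≤ Real.sqrt (1 - r ^ 2) := hnorm
end
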